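/- The softmax function z ↦ softmax(z) on ℝⁿ is 1-Lipschitz from the ℓ∞ norm to the ℓ∞ norm: for all z, z' ∈ ℝⁿ, ‖softmax(z) − softmax(z')‖_∞ ≤ ‖z − z'‖_∞. Consequently, with temperature T > 0, ‖softmax(S/T) − softmax(S'/T)‖_∞ ≤ (1/T)‖S − S'‖_∞. -/

import Mathlib

noncomputable def softmax {n : ℕ} (z : Fin n → ℝ) : Fin n → ℝ :=
  fun i => Real.exp (z i) / ∑ j, Real.exp (z j)

lemma sm_deriv_bound {n : ℕ} (E d : Fin n → ℝ) (hE : ∀ j, 0 < E j) (i : Fin n) (ε : ℝ)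
    (hd : ∀ j, |d j| ≤ ε) :
    |(E i * d i * (∑ j, E j) - E i * ∑ j, E j * d j) / (∑ j, E j) ^ 2| ≤ ε := by
  set D := ∑ j, E j with hDdef
  have hD : 0 < D := Finset.sum_pos (fun j _ => hE j) ⟨i, Finset.mem_univ i⟩
  have hε : 0 ≤ ε := le_trans (abs_nonneg _) (hd i)
  have h1 : E i * d i * D - E i * ∑ j, E j * d j
      = E i * ∑ j ∈ Finset.univ.erase i, E j * (d i - d j) := by
    rw [hDdef, Finset.sum_erase _ (by ring), Finset.mul_sum, Finset.mul_sum, Finset.mul_sum,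
      ← Finset.sum_sub_distrib]
    congr 1; ext j; ring
  rw [h1, abs_div, abs_mul]
  have hB : |∑ j ∈ Finset.univ.erase i, E j * (d i - d j)|
      ≤ (∑ j ∈ Finset.univ.erase i, E j) * (2 * ε) := by
    calc |∑ j ∈ Finset.univ.erase i, E j * (d i - d j)|
        ≤ ∑ j ∈ Finset.univ.erase i, |E j * (d i - d j)| := Finset.abs_sum_le_sum_abs _ _
      _ ≤ ∑ j ∈ Finset.univ.erase i, E j * (2 * ε) := by
          apply Finset.sum_le_sum
          intro j _
          rw [abs_mul, abs_of_pos (hE j)]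
          refine mul_le_mul_of_nonneg_left ?_ (hE j).le
          calc |d i - d j| ≤ |d i| + |d j| := abs_sub _ _
            _ ≤ 2 * ε := by linarith [hd i, hd j]
      _ = (∑ j ∈ Finset.univ.erase i, E j) * (2 * ε) := by rw [Finset.sum_mul]
  have hsum : E i + ∑ j ∈ Finset.univ.erase i, E j = D := by
    rw [hDdef, Finset.add_sum_erase _ _ (Finset.mem_univ i)]
  set B := ∑ j ∈ Finset.univ.erase i, E j with hBdef
  have hB0 : 0 ≤ B := Finset.sum_nonneg fun j _ => (hE j).le
  have hEi := hE i
  rw [abs_of_pos hEi, abs_of_pos (pow_pos hD 2)]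
  rw [div_le_iff₀ (pow_pos hD 2)]
  calc E i * |∑ j ∈ Finset.univ.erase i, E j * (d i - d j)| ≤ E i * (B * (2 * ε)) :=
        mul_le_mul_of_nonneg_left hB hEi.le
    _ ≤ ε * D ^ 2 := by rw [← hsum]; nlinarith [mul_nonneg hε (sq_nonneg (E i - B))]

lemma sm_coord {n : ℕ} (z d : Fin n → ℝ) (i : Fin n) (ε : ℝ) (hd : ∀ j, |d j| ≤ ε) :
    |softmax (fun j => z j + d j) i - softmax z i| ≤ ε := by
  have hε : 0 ≤ ε := le_trans (abs_nonneg _) (hd i)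
  set φ : ℝ → ℝ := fun t => Real.exp (z i + t * d i) / ∑ j, Real.exp (z j + t * d j) with hφ
  set φ' : ℝ → ℝ := fun t =>
    (Real.exp (z i + t * d i) * d i * (∑ j, Real.exp (z j + t * d j))
      - Real.exp (z i + t * d i) * ∑ j, Real.exp (z j + t * d j) * d j)
      / (∑ j, Real.exp (z j + t * d j)) ^ 2 with hφ'
  have hDpos : ∀ t : ℝ, 0 < ∑ j, Real.exp (z j + t * d j) :=
    fun t => Finset.sum_pos (fun j _ => Real.exp_pos _) ⟨i, Finset.mem_univ i⟩
  have hderiv : ∀ t : ℝ, HasDerivAt φ (φ' t) t := by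
    intro t
    have hnum : ∀ j : Fin n, HasDerivAt (fun t : ℝ => Real.exp (z j + t * d j))
        (Real.exp (z j + t * d j) * d j) t := by
      intro j
      have h1 : HasDerivAt (fun t : ℝ => z j + t * d j) (d j) t := by
        simpa using ((hasDerivAt_id t).mul_const (d j)).const_add (z j)
      exact h1.exp
    have hden : HasDerivAt (fun t : ℝ => ∑ j, Real.exp (z j + t * d j))
        (∑ j, Real.exp (z j + t * d j) * d j) t :=
      HasDerivAt.fun_sum (fun j _ => hnum j)
    exact (hnum i).div hden (hDpos t).ne'
  have hbound : ∀ t : ℝ, ‖φ' t‖ ≤ ε := by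
    intro t
    rw [Real.norm_eq_abs, hφ']
    exact sm_deriv_bound (fun j => Real.exp (z j + t * d j)) d
      (fun j => Real.exp_pos _) i ε hd
  have := Convex.norm_image_sub_le_of_norm_hasDerivWithin_le
    (s := Set.univ) (f := φ) (f' := φ') (C := ε) (x := 0) (y := 1)
    (fun x _ => (hderiv x).hasDerivWithinAt) (fun x _ => hbound x)
    convex_univ (Set.mem_univ 0) (Set.mem_univ 1)
  simp only [Real.norm_eq_abs] at this
  have h01 : φ 1 = softmax (fun j => z j + d j) i := by simp [hφ, softmax]
  have h00 : φ 0 = softmax z i := by simp [hφ, softmax]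
  rw [h01, h00] at this
  simpa using this

theorem stmt_9 {n : ℕ} :
    (∀ z z' : Fin n → ℝ, ‖softmax z - softmax z'‖ ≤ ‖z - z'‖) ∧
    (∀ T : ℝ, 0 < T → ∀ S S' : Fin n → ℝ,
      ‖softmax (fun i => S i / T) - softmax (fun i => S' i / T)‖ ≤ (1 / T) * ‖S - S'‖) := by
  have main : ∀ z z' : Fin n → ℝ, ‖softmax z - softmax z'‖ ≤ ‖z - z'‖ := by
    intro z z'
    rw [pi_norm_le_iff_of_nonneg (norm_nonneg _)]
    intro i
    have hd : ∀ j, |z j - z' j| ≤ ‖z - z'‖ := by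
      intro j
      simpa [Real.norm_eq_abs] using norm_le_pi_norm (z - z') j
    have := sm_coord z' (fun j => z j - z' j) i ‖z - z'‖ hd
    have hz : (fun j => z' j + (z j - z' j)) = z := by funext j; ring
    rw [hz] at this
    simpa [Real.norm_eq_abs] using this
  refine ⟨main, ?_⟩
  intro T hT S S'
  have h := main (fun i => S i / T) (fun i => S' i / T)
  have heq : (fun i => S i / T) - (fun i => S' i / T) = (1 / T) • (S - S') := by
    funext j; simp [Pi.sub_apply]; ring
  rw [heq, norm_smul, Real.norm_eq_abs, abs_of_pos (by positivity : (0:ℝ) < 1 / T)] at h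
  exact h
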